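/- arXiv:1703.02699 — 3 statements merged into one kernel-verified Lean document; each statement's English description precedes it below -/
import Mathlib

section
/- Let S₁ and S₂ be nonempty finite subsets of ℝⁿ such that S₁ ⊆ {x ∈ ℝⁿ : ∑_{i=1}^{n₁} x_i = N₁ and x_i = 0 for all i > n₁} and S₂ ⊆ {x ∈ ℝⁿ : ∑_{i=n₁}^{n} x_i = N₂ and x_i = 0 for all i < n₁}, and let P₁ and P₂ be their convex hulls. Then the set of extreme points of the Minkowski sum P₁ + P₂ is exactly the sumset (extreme points of P₁) + (extreme points of P₂); that is, the vertices of P₁ + P₂ are precisely the sums of a vertex of P₁ and a vertex of P₂. -/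
open Pointwise

/-- **Sharpness of the state polytope decomposition (convex-geometry form, two factors).**
Let `S₁, S₂` be nonempty finite subsets of `ℝⁿ` (coordinates indexed by `Fin n`, thought of as
`x₁, …, x_n`), with `S₁` contained in the affine subspace
`{x | ∑_{i=1}^{n₁} x_i = N₁, x_i = 0 for i > n₁}` and `S₂` contained in
`{x | ∑_{i=n₁}^{n} x_i = N₂, x_i = 0 for i < n₁}`.  If `P₁, P₂` are their convex hulls, then the
extreme points (vertices) of the Minkowski sum `P₁ + P₂` are exactly the sums of an extreme point
of `P₁` and an extreme point of `P₂`.  (An index `i : Fin n` represents the coordinate `x_{i+1}`.) -/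
theorem extremePoints_minkowski_sum_convexHull
    (n n₁ : ℕ) (hn : 1 ≤ n) (hn₁ : 1 ≤ n₁) (hn₁n : n₁ ≤ n) (N₁ N₂ : ℝ)
    (S₁ S₂ : Set (Fin n → ℝ))
    (hS₁ne : S₁.Nonempty) (hS₁fin : S₁.Finite)
    (hS₂ne : S₂.Nonempty) (hS₂fin : S₂.Finite)
    (hS₁ : S₁ ⊆ {x : Fin n → ℝ |
      (∑ i ∈ Finset.univ.filter (fun i : Fin n => (i : ℕ) + 1 ≤ n₁), x i) = N₁ ∧
      ∀ i : Fin n, n₁ < (i : ℕ) + 1 → x i = 0})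
    (hS₂ : S₂ ⊆ {x : Fin n → ℝ |
      (∑ i ∈ Finset.univ.filter (fun i : Fin n => n₁ ≤ (i : ℕ) + 1), x i) = N₂ ∧
      ∀ i : Fin n, (i : ℕ) + 1 < n₁ → x i = 0}) :
    (convexHull ℝ S₁ + convexHull ℝ S₂).extremePoints ℝ
      = (convexHull ℝ S₁).extremePoints ℝ + (convexHull ℝ S₂).extremePoints ℝ := by
  classical
  set H₁ : Set (Fin n → ℝ) := {x : Fin n → ℝ |
      (∑ i ∈ Finset.univ.filter (fun i : Fin n => (i : ℕ) + 1 ≤ n₁), x i) = N₁ ∧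
      ∀ i : Fin n, n₁ < (i : ℕ) + 1 → x i = 0} with hH₁def
  set H₂ : Set (Fin n → ℝ) := {x : Fin n → ℝ |
      (∑ i ∈ Finset.univ.filter (fun i : Fin n => n₁ ≤ (i : ℕ) + 1), x i) = N₂ ∧
      ∀ i : Fin n, (i : ℕ) + 1 < n₁ → x i = 0} with hH₂def
  have hconv₁ : Convex ℝ H₁ := by
    intro x hx y hy a b ha hb hab
    constructor
    · have : (∑ i ∈ Finset.univ.filter (fun i : Fin n => (i : ℕ) + 1 ≤ n₁),
          (a • x + b • y) i)
          = a * (∑ i ∈ Finset.univ.filter (fun i : Fin n => (i : ℕ) + 1 ≤ n₁), x i)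
            + b * (∑ i ∈ Finset.univ.filter (fun i : Fin n => (i : ℕ) + 1 ≤ n₁), y i) := by
        rw [Finset.mul_sum, Finset.mul_sum, ← Finset.sum_add_distrib]
        simp [mul_comm]
      rw [this, hx.1, hy.1]
      linear_combination N₁ * hab
    · intro i hi
      have h1 := hx.2 i hi
      have h2 := hy.2 i hi
      simp [h1, h2]
  have hconv₂ : Convex ℝ H₂ := by
    intro x hx y hy a b ha hb hab
    constructor
    · have : (∑ i ∈ Finset.univ.filter (fun i : Fin n => n₁ ≤ (i : ℕ) + 1),
          (a • x + b • y) i)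
          = a * (∑ i ∈ Finset.univ.filter (fun i : Fin n => n₁ ≤ (i : ℕ) + 1), x i)
            + b * (∑ i ∈ Finset.univ.filter (fun i : Fin n => n₁ ≤ (i : ℕ) + 1), y i) := by
        rw [Finset.mul_sum, Finset.mul_sum, ← Finset.sum_add_distrib]
        simp [mul_comm]
      rw [this, hx.1, hy.1]
      linear_combination N₂ * hab
    · intro i hi
      have h1 := hx.2 i hi
      have h2 := hy.2 i hi
      simp [h1, h2]
  have hA : convexHull ℝ S₁ ⊆ H₁ := convexHull_min hS₁ hconv₁
  have hB : convexHull ℝ S₂ ⊆ H₂ := convexHull_min hS₂ hconv₂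
  -- uniqueness of the decomposition
  have huniq : ∀ a a' b b' : Fin n → ℝ, a ∈ H₁ → a' ∈ H₁ → b ∈ H₂ → b' ∈ H₂ →
      a + b = a' + b' → a = a' ∧ b = b' := by
    intro a a' b b' ha ha' hb hb' h
    have key : ∀ j : Fin n, (j : ℕ) + 1 < n₁ → a j = a' j := by
      intro j hj
      have h0 := congrFun h j
      have hbj := hb.2 j hj
      have hbj' := hb'.2 j hj
      simp only [Pi.add_apply, hbj, hbj', add_zero] at h0
      exact h0
    have ha_eq : a = a' := by
      funext i
      rcases lt_trichotomy ((i : ℕ) + 1) n₁ with hlt | heq | hgt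
      · exact key i hlt
      · -- i is the middle coordinate; use the sum condition
        set i₀ : Fin n := i
        have hmem : i₀ ∈ Finset.univ.filter (fun i : Fin n => (i : ℕ) + 1 ≤ n₁) := by
          simp only [Finset.mem_filter, Finset.mem_univ, true_and]
          exact heq.le
        have hs1 := ha.1
        have hs2 := ha'.1
        rw [← Finset.add_sum_erase _ _ hmem] at hs1 hs2
        have herase : (∑ j ∈ (Finset.univ.filter
              (fun i : Fin n => (i : ℕ) + 1 ≤ n₁)).erase i₀, a j)
            = ∑ j ∈ (Finset.univ.filter
              (fun i : Fin n => (i : ℕ) + 1 ≤ n₁)).erase i₀, a' j := by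
          refine Finset.sum_congr rfl ?_
          intro j hj
          rw [Finset.mem_erase, Finset.mem_filter] at hj
          apply key
          have hne : (j : ℕ) ≠ (i₀ : ℕ) := fun hc => hj.1 (Fin.ext hc)
          have : (i₀ : ℕ) + 1 = n₁ := heq
          omega
        have : a i₀ = a' i₀ := by
          rw [herase] at hs1
          linarith [hs1, hs2]
        exact this
      · rw [ha.2 i hgt, ha'.2 i hgt]
    refine ⟨ha_eq, ?_⟩
    have := h
    rw [ha_eq] at this
    exact add_left_cancel this
  set A := convexHull ℝ S₁ with hAdef
  set B := convexHull ℝ S₂ with hBdef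
  have hAconv : Convex ℝ A := convex_convexHull ℝ S₁
  have hBconv : Convex ℝ B := convex_convexHull ℝ S₂
  apply Set.Subset.antisymm
  · -- extreme points of A + B are sums of extreme points
    intro p hp
    rw [mem_extremePoints] at hp
    obtain ⟨hpmem, hpext⟩ := hp
    obtain ⟨a, ha, b, hb, rfl⟩ := Set.mem_add.1 hpmem
    refine Set.add_mem_add ?_ ?_
    · rw [mem_extremePoints]
      refine ⟨ha, ?_⟩
      intro a₁ ha₁ a₂ ha₂ haseg
      obtain ⟨t, s, ht, hs, hts, hcombo⟩ := haseg
      have h1 : a₁ + b ∈ A + B := Set.add_mem_add ha₁ hb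
      have h2 : a₂ + b ∈ A + B := Set.add_mem_add ha₂ hb
      have hseg : a + b ∈ openSegment ℝ (a₁ + b) (a₂ + b) := by
        refine ⟨t, s, ht, hs, hts, ?_⟩
        funext i
        have := congrFun hcombo i
        simp only [Pi.add_apply, Pi.smul_apply, smul_eq_mul] at this ⊢
        linear_combination this + (b i) * hts
      obtain ⟨e1, e2⟩ := hpext _ h1 _ h2 hseg
      constructor
      · have := e1
        exact add_right_cancel this
      · exact add_right_cancel e2
    · rw [mem_extremePoints]
      refine ⟨hb, ?_⟩
      intro b₁ hb₁ b₂ hb₂ hbseg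
      obtain ⟨t, s, ht, hs, hts, hcombo⟩ := hbseg
      have h1 : a + b₁ ∈ A + B := Set.add_mem_add ha hb₁
      have h2 : a + b₂ ∈ A + B := Set.add_mem_add ha hb₂
      have hseg : a + b ∈ openSegment ℝ (a + b₁) (a + b₂) := by
        refine ⟨t, s, ht, hs, hts, ?_⟩
        funext i
        have := congrFun hcombo i
        simp only [Pi.add_apply, Pi.smul_apply, smul_eq_mul] at this ⊢
        linear_combination this + (a i) * hts
      obtain ⟨e1, e2⟩ := hpext _ h1 _ h2 hseg
      exact ⟨add_left_cancel e1, add_left_cancel e2⟩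
  · -- sums of extreme points are extreme
    rintro p ⟨a, haext, b, hbext, rfl⟩
    rw [mem_extremePoints] at haext hbext ⊢
    obtain ⟨ha, haext⟩ := haext
    obtain ⟨hb, hbext⟩ := hbext
    refine ⟨Set.add_mem_add ha hb, ?_⟩
    intro x₁ hx₁ x₂ hx₂ hseg
    obtain ⟨a₁, ha₁, b₁, hb₁, rfl⟩ := Set.mem_add.1 hx₁
    obtain ⟨a₂, ha₂, b₂, hb₂, rfl⟩ := Set.mem_add.1 hx₂
    obtain ⟨t, s, ht, hs, hts, hcombo⟩ := hseg
    have hamem : t • a₁ + s • a₂ ∈ A := hAconv ha₁ ha₂ ht.le hs.le hts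
    have hbmem : t • b₁ + s • b₂ ∈ B := hBconv hb₁ hb₂ ht.le hs.le hts
    have hcombo' : t • (a₁ + b₁) + s • (a₂ + b₂) = a + b := hcombo
    have hdecomp : (t • a₁ + s • a₂) + (t • b₁ + s • b₂) = a + b := by
      rw [← hcombo']
      funext i
      simp only [Pi.add_apply, Pi.smul_apply, smul_eq_mul]
      ring
    obtain ⟨hea, heb⟩ := huniq _ _ _ _ (hA hamem) (hA ha) (hB hbmem) (hB hb) hdecomp
    have hsa : a ∈ openSegment ℝ a₁ a₂ := ⟨t, s, ht, hs, hts, hea⟩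
    have hsb : b ∈ openSegment ℝ b₁ b₂ := ⟨t, s, ht, hs, hts, heb⟩
    obtain ⟨ea1, ea2⟩ := haext _ ha₁ _ ha₂ hsa
    obtain ⟨eb1, eb2⟩ := hbext _ hb₁ _ hb₂ hsb
    rw [ea1, ea2, eb1, eb2]
    exact ⟨rfl, rfl⟩
end

section
/- Let E be a real vector space, let A₁ and A₂ be affine subspaces of E whose direction subspaces intersect trivially (direction(A₁) ∩ direction(A₂) = {0}), and let P₁ ⊆ A₁ and P₂ ⊆ A₂ be convex subsets. Then the set of extreme points of the Minkowski sum P₁ + P₂ equals the sumset (extreme points of P₁) + (extreme points of P₂). -/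
open Pointwise

/-- If `P₁, P₂` are convex subsets of a real vector space `E` contained in affine subspaces
`A₁, A₂` whose direction subspaces intersect trivially, then the extreme points of the
Minkowski sum `P₁ + P₂` are exactly the sums of an extreme point of `P₁` and an extreme
point of `P₂`. -/
theorem extremePoints_add_of_direction_inf_eq_bot
    (E : Type*) [AddCommGroup E] [Module ℝ E]
    (A₁ A₂ : AffineSubspace ℝ E)
    (hdir : A₁.direction ⊓ A₂.direction = ⊥)
    (P₁ P₂ : Set E) (hP₁A : P₁ ⊆ (A₁ : Set E)) (hP₂A : P₂ ⊆ (A₂ : Set E))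
    (hP₁ : Convex ℝ P₁) (hP₂ : Convex ℝ P₂) :
    (P₁ + P₂).extremePoints ℝ = P₁.extremePoints ℝ + P₂.extremePoints ℝ := by
  -- uniqueness of decomposition
  have huniq : ∀ x ∈ P₁, ∀ x' ∈ P₁, ∀ y ∈ P₂, ∀ y' ∈ P₂,
      x + y = x' + y' → x = x' ∧ y = y' := by
    intro x hx x' hx' y hy y' hy' h
    have h1 : x - x' ∈ A₁.direction :=
      AffineSubspace.vsub_mem_direction (hP₁A hx) (hP₁A hx')
    have h2 : x - x' ∈ A₂.direction := by
      have hxy : x - x' = y' - y := by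
        rw [sub_eq_sub_iff_add_eq_add, h]; abel
      rw [hxy]
      exact AffineSubspace.vsub_mem_direction (hP₂A hy') (hP₂A hy)
    have h0 : x - x' = 0 := by
      have := hdir ▸ (Submodule.mem_inf.2 ⟨h1, h2⟩)
      simpa using this
    have hxx : x = x' := sub_eq_zero.1 h0
    refine ⟨hxx, ?_⟩
    rw [hxx] at h
    exact add_left_cancel h
  ext z
  constructor
  · rintro ⟨⟨x, hx, y, hy, rfl⟩, hext⟩
    refine ⟨x, ?_, y, ?_, rfl⟩
    · refine ⟨hx, fun a ha b hb hseg => ?_⟩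
      obtain ⟨s, t, hs, ht, hst, heq⟩ := hseg
      have key : s • (a + y) + t • (b + y) = x + y := by
        rw [smul_add, smul_add, add_add_add_comm, ← add_smul, hst, one_smul, heq]
      have hmem : (x + y : E) ∈ openSegment ℝ (a + y) (b + y) :=
        ⟨s, t, hs, ht, hst, key⟩
      obtain ⟨h1, h2⟩ := (mem_extremePoints.1 (⟨⟨x, hx, y, hy, rfl⟩, hext⟩ : x + y ∈ (P₁ + P₂).extremePoints ℝ)).2
        (a + y) ⟨a, ha, y, hy, rfl⟩ (b + y) ⟨b, hb, y, hy, rfl⟩ hmem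
      exact add_right_cancel h1
    · refine ⟨hy, fun a ha b hb hseg => ?_⟩
      obtain ⟨s, t, hs, ht, hst, heq⟩ := hseg
      have key : s • (x + a) + t • (x + b) = x + y := by
        rw [smul_add, smul_add, add_add_add_comm, ← add_smul, hst, one_smul, heq]
      have hmem : (x + y : E) ∈ openSegment ℝ (x + a) (x + b) :=
        ⟨s, t, hs, ht, hst, key⟩
      obtain ⟨h1, h2⟩ := (mem_extremePoints.1 (⟨⟨x, hx, y, hy, rfl⟩, hext⟩ : x + y ∈ (P₁ + P₂).extremePoints ℝ)).2
        (x + a) ⟨x, hx, a, ha, rfl⟩ (x + b) ⟨x, hx, b, hb, rfl⟩ hmem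
      exact add_left_cancel h1
  · rintro ⟨x, ⟨hx, hxe⟩, y, ⟨hy, hye⟩, rfl⟩
    refine ⟨⟨x, hx, y, hy, rfl⟩, ?_⟩
    rintro a ⟨a₁, ha₁, a₂, ha₂, rfl⟩ b ⟨b₁, hb₁, b₂, hb₂, rfl⟩ hseg
    obtain ⟨s, t, hs, ht, hst, heq⟩ := hseg
    dsimp only at heq
    have hc₁ : s • a₁ + t • b₁ ∈ P₁ := hP₁ ha₁ hb₁ hs.le ht.le hst
    have hc₂ : s • a₂ + t • b₂ ∈ P₂ := hP₂ ha₂ hb₂ hs.le ht.le hst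
    have hdec : (s • a₁ + t • b₁) + (s • a₂ + t • b₂) = x + y := by
      rw [← heq]; simp only [smul_add]; abel
    obtain ⟨e1, e2⟩ := huniq _ hc₁ x hx _ hc₂ y hy hdec
    obtain ⟨f1, f2⟩ := (mem_extremePoints.1 ⟨hx, hxe⟩).2 _ ha₁ _ hb₁ ⟨s, t, hs, ht, hst, e1⟩
    obtain ⟨g1, g2⟩ := (mem_extremePoints.1 ⟨hy, hye⟩).2 _ ha₂ _ hb₂ ⟨s, t, hs, ht, hst, e2⟩
    show a₁ + a₂ = x + y; rw [f1, g1]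
end

section
/- Let J ⊆ S_m be any linear subspace such that the monomial x_ℓ^m does not belong to J. Then the three subspaces J ∩ W₁, J ∩ W₂ and J ∩ W₃ are independent: their sum inside S_m is an internal direct sum (each one intersects the sum of the other two trivially). -/
open Pointwise

namespace StatePolytopePaper

/-- Exponent vectors of monomials in the variables `x₀, …, x_n`. -/
abbrev Exp (n : ℕ) := Fin (n + 1) → ℕ

/-- The ambient vector space of formal `k`-linear combinations of monomials, i.e. the polynomial
ring `k[x₀, …, x_n]` with monomials indexed by their exponent vectors.  `S_m` and all spans of
sets of degree-`m` monomials are subspaces of this space. -/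
abbrev Poly (k : Type*) [Field k] (n : ℕ) := Exp n →₀ k

/-- The span of the set of monomials with exponent vectors in `M`. -/
def spanM (k : Type*) [Field k] (n : ℕ) (M : Set (Exp n)) : Submodule k (Poly k n) :=
  Finsupp.supported k k M

/-- The set of exponent vectors of degree `m`; `S_m = spanM k n (degSet n m)`. -/
def degSet (n m : ℕ) : Set (Exp n) := {α | ∑ i, α i = m}

/-- The state set `Ξ_M(U) ⊆ ℤ^{n+1}` of a subspace `U ⊆ span(M)`: all sums `∑_{α ∈ A} α` over
subsets `A ⊆ M` such that `span(M)` is the internal direct sum of `U` and `span(M ∖ A)`. -/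
def stateSet (k : Type*) [Field k] (n : ℕ) (M : Set (Exp n)) (U : Submodule k (Poly k n)) :
    Set (Fin (n + 1) → ℤ) :=
  {ξ | ∃ A : Finset (Exp n), ↑A ⊆ M ∧
    U ⊓ spanM k n (M \ ↑A) = ⊥ ∧ U ⊔ spanM k n (M \ ↑A) = spanM k n M ∧
    ξ = ∑ α ∈ A, fun i => (α i : ℤ)}

/-- The state polytope `𝒫_M(U) ⊆ ℝ^{n+1}`: the convex hull of the state set. -/
noncomputable def statePolytope (k : Type*) [Field k] (n : ℕ) (M : Set (Exp n))
    (U : Submodule k (Poly k n)) : Set (Fin (n + 1) → ℝ) :=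
  convexHull ℝ ((fun (ξ : Fin (n + 1) → ℤ) (i : Fin (n + 1)) => (ξ i : ℝ)) '' stateSet k n M U)

/-- `M₁`: degree-`m` exponent vectors supported on `x₀, …, x_ℓ`. -/
def M₁ (n m ℓ : ℕ) : Set (Exp n) :=
  {α | ∑ i, α i = m ∧ ∀ j : Fin (n + 1), ℓ < (j : ℕ) → α j = 0}

/-- `M₂`: degree-`m` exponent vectors supported on `x_ℓ, …, x_n`. -/
def M₂ (n m ℓ : ℕ) : Set (Exp n) :=
  {α | ∑ i, α i = m ∧ ∀ j : Fin (n + 1), (j : ℕ) < ℓ → α j = 0}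

/-- `M₃`: degree-`m` exponent vectors divisible by some `x_i`, `i < ℓ`, and some `x_j`, `j > ℓ`. -/
def M₃ (n m ℓ : ℕ) : Set (Exp n) :=
  {α | ∑ i, α i = m ∧ (∃ i : Fin (n + 1), (i : ℕ) < ℓ ∧ α i ≠ 0) ∧
    (∃ j : Fin (n + 1), ℓ < (j : ℕ) ∧ α j ≠ 0)}

/-- `τ = ∑_{α ∈ M₃} α ∈ ℤ^{n+1}`. -/
def tau (n m ℓ : ℕ) : Fin (n + 1) → ℤ :=
  ∑ α ∈ (Finset.Nat.antidiagonalTuple (n + 1) m).filter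
      (fun α => (∃ i : Fin (n + 1), (i : ℕ) < ℓ ∧ α i ≠ 0) ∧
        (∃ j : Fin (n + 1), ℓ < (j : ℕ) ∧ α j ≠ 0)),
    fun i => (α i : ℤ)



lemma aux_zero {k : Type*} [Field k] {n : ℕ} (J : Submodule k (Poly k n))
    (S T : Set (Exp n)) (e : Exp n)
    (hST : ∀ a, a ∈ S → a ∈ T → a = e) (he : Finsupp.single e (1 : k) ∉ J)
    (x : Poly k n) (hxJ : x ∈ J) (hxS : x ∈ spanM k n S) (hxT : x ∈ spanM k n T) :
    x = 0 := by
  rw [spanM, Finsupp.mem_supported'] at hxS hxT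
  have hout : ∀ a, a ≠ e → x a = 0 := by
    intro a ha
    by_contra h
    exact ha (hST a (by by_contra hS; exact h (hxS a hS))
      (by by_contra hT; exact h (hxT a hT)))
  by_contra hx0
  have hxe : x e ≠ 0 := by
    intro h
    apply hx0
    ext a
    by_cases hae : a = e
    · simpa [hae] using h
    · exact hout a hae
  apply he
  have : Finsupp.single e (1 : k) = (x e)⁻¹ • x := by
    ext a
    by_cases hae : a = e
    · subst hae
      simp [inv_mul_cancel₀ hxe]
    · simp [Finsupp.single_apply, Ne.symm hae, hout a hae]
  rw [this]
  exact J.smul_mem _ hxJ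

lemma sup_le_union {k : Type*} [Field k] {n : ℕ} (J : Submodule k (Poly k n))
    (S T : Set (Exp n)) :
    (J ⊓ spanM k n S) ⊔ (J ⊓ spanM k n T) ≤ spanM k n (S ∪ T) := by
  simp only [spanM, Finsupp.supported_union]
  exact sup_le_sup inf_le_right inf_le_right

lemma M₁_inter_M₂ {n m ℓ : ℕ} (hℓn : ℓ < n) (α : Exp n)
    (h1 : α ∈ M₁ n m ℓ) (h2 : α ∈ M₂ n m ℓ) :
    α = fun i : Fin (n + 1) => if (i : ℕ) = ℓ then m else 0 := by
  obtain ⟨hs, hz1⟩ := h1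
  obtain ⟨_, hz2⟩ := h2
  have hz : ∀ j : Fin (n + 1), (j : ℕ) ≠ ℓ → α j = 0 := by
    intro j hj
    rcases lt_or_gt_of_ne hj with h | h
    · exact hz2 j h
    · exact hz1 j h
  have hℓ1 : ℓ < n + 1 := by omega
  have hαℓ : α ⟨ℓ, hℓ1⟩ = m := by
    rw [← hs]
    refine (Finset.sum_eq_single _ (fun j _ hj => hz j ?_) (by simp)).symm
    intro hc
    exact hj (by ext; exact hc)
  funext i
  by_cases hi : (i : ℕ) = ℓ
  · have : i = ⟨ℓ, hℓ1⟩ := by ext; exact hi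
    simp [this, hαℓ, hi]
  · simp [hi, hz i hi]

/-- If `J ⊆ S_m` is a subspace not containing the monomial `x_ℓ^m`, then the three subspaces
`J ∩ W₁`, `J ∩ W₂`, `J ∩ W₃` are independent: each one meets the sum of the other two
trivially, so their sum inside `S_m` is an internal direct sum. -/
theorem inf_spans_independent (k : Type*) [Field k] (n m ℓ : ℕ)
    (hn : 1 ≤ n) (hm : 1 ≤ m) (hℓ0 : 0 < ℓ) (hℓn : ℓ < n)
    (J : Submodule k (Poly k n))
    (hJ : J ≤ spanM k n (degSet n m))
    (hxℓ : Finsupp.single (fun i : Fin (n + 1) => if (i : ℕ) = ℓ then m else 0) (1 : k) ∉ J) :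
    (J ⊓ spanM k n (M₁ n m ℓ)) ⊓
        ((J ⊓ spanM k n (M₂ n m ℓ)) ⊔ (J ⊓ spanM k n (M₃ n m ℓ))) = ⊥ ∧
      (J ⊓ spanM k n (M₂ n m ℓ)) ⊓
        ((J ⊓ spanM k n (M₁ n m ℓ)) ⊔ (J ⊓ spanM k n (M₃ n m ℓ))) = ⊥ ∧
      (J ⊓ spanM k n (M₃ n m ℓ)) ⊓
        ((J ⊓ spanM k n (M₁ n m ℓ)) ⊔ (J ⊓ spanM k n (M₂ n m ℓ))) = ⊥ := by
  set e : Exp n := fun i : Fin (n + 1) => if (i : ℕ) = ℓ then m else 0 with he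
  have h13 : ∀ α : Exp n, α ∈ M₁ n m ℓ → α ∈ M₃ n m ℓ → False := by
    rintro α ⟨_, hz1⟩ ⟨_, _, j, hj, hαj⟩
    exact hαj (hz1 j hj)
  have h23 : ∀ α : Exp n, α ∈ M₂ n m ℓ → α ∈ M₃ n m ℓ → False := by
    rintro α ⟨_, hz2⟩ ⟨_, ⟨i, hi, hαi⟩, _⟩
    exact hαi (hz2 i hi)
  refine ⟨?_, ?_, ?_⟩
  · rw [eq_bot_iff]
    rintro x ⟨⟨hxJ, hx1⟩, hx2⟩
    have hx2' : x ∈ spanM k n (M₂ n m ℓ ∪ M₃ n m ℓ) := sup_le_union J _ _ hx2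
    have : x = 0 := by
      refine aux_zero J _ _ e ?_ hxℓ x hxJ hx1 hx2'
      rintro a haS (haT | haT)
      · exact M₁_inter_M₂ hℓn a haS haT
      · exact absurd haT (fun h => h13 a haS h)
    simp [this]
  · rw [eq_bot_iff]
    rintro x ⟨⟨hxJ, hx2⟩, hx1⟩
    have hx1' : x ∈ spanM k n (M₁ n m ℓ ∪ M₃ n m ℓ) := sup_le_union J _ _ hx1
    have : x = 0 := by
      refine aux_zero J _ _ e ?_ hxℓ x hxJ hx2 hx1'
      rintro a haS (haT | haT)
      · exact M₁_inter_M₂ hℓn a haT haS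
      · exact absurd haT (fun h => h23 a haS h)
    simp [this]
  · rw [eq_bot_iff]
    rintro x ⟨⟨hxJ, hx3⟩, hx12⟩
    have hx12' : x ∈ spanM k n (M₁ n m ℓ ∪ M₂ n m ℓ) := sup_le_union J _ _ hx12
    have : x = 0 := by
      refine aux_zero J _ _ e ?_ hxℓ x hxJ hx3 hx12'
      rintro a haS (haT | haT)
      · exact absurd haS (fun h => h13 a haT h)
      · exact absurd haS (fun h => h23 a haT h)
    simp [this]

end StatePolytopePaper
end
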